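/- Let K_1 ⊆ ℂ and K_2 ⊆ ℂ be nonempty compact sets and K = K_1 × K_2 ⊆ ℂ². For points z_1,…,z_4 ∈ K with z_i = (x_i, y_i), the modulus of det V_{(2,2)}(z_1,…,z_4) (the matrix with rows (1, x_i, y_i, x_i y_i)) is at most 2·M_1²·M_2², where M_1 = sup over pairs (a,b) ∈ K_1² of |b−a| is the diameter of K_1 and M_2 is the diameter of K_2. -/

import Mathlib

lemma det_fin_four_aux (A : Matrix (Fin 4) (Fin 4) ℂ) : A.det =
    A 0 0 * (A 1 1 * (A 2 2 * A 3 3 - A 2 3 * A 3 2) - A 1 2 * (A 2 1 * A 3 3 - A 2 3 * A 3 1) + A 1 3 * (A 2 1 * A 3 2 - A 2 2 * A 3 1))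
  - A 0 1 * (A 1 0 * (A 2 2 * A 3 3 - A 2 3 * A 3 2) - A 1 2 * (A 2 0 * A 3 3 - A 2 3 * A 3 0) + A 1 3 * (A 2 0 * A 3 2 - A 2 2 * A 3 0))
  + A 0 2 * (A 1 0 * (A 2 1 * A 3 3 - A 2 3 * A 3 1) - A 1 1 * (A 2 0 * A 3 3 - A 2 3 * A 3 0) + A 1 3 * (A 2 0 * A 3 1 - A 2 1 * A 3 0))
  - A 0 3 * (A 1 0 * (A 2 1 * A 3 2 - A 2 2 * A 3 1) - A 1 1 * (A 2 0 * A 3 2 - A 2 2 * A 3 0) + A 1 2 * (A 2 0 * A 3 1 - A 2 1 * A 3 0)) := by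
  rw [Matrix.det_succ_row_zero]
  simp [Fin.sum_univ_succ, Matrix.det_fin_three, Matrix.submatrix, Fin.succAbove,
    show (Fin.succ 2 : Fin 4) = 3 from rfl, show (Fin.castSucc 2 : Fin 4) = 2 from rfl]
  ring

theorem stmt_17 (K₁ K₂ : Set ℂ) (hK₁c : IsCompact K₁) (hK₂c : IsCompact K₂)
    (hK₁ : K₁.Nonempty) (hK₂ : K₂.Nonempty) (z : Fin 4 → ℂ × ℂ)
    (hz : ∀ i, z i ∈ K₁ ×ˢ K₂) :
    ‖(Matrix.of fun i j =>
            ![1, (z i).1, (z i).2, (z i).1 * (z i).2] j : Matrix (Fin 4) (Fin 4) ℂ).det‖ ≤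
      2 * Metric.diam K₁ ^ 2 * Metric.diam K₂ ^ 2 := by
  have hx : ∀ i j : Fin 4, ‖(z i).1 - (z j).1‖ ≤ Metric.diam K₁ := fun i j => by
    rw [← Complex.dist_eq]
    exact Metric.dist_le_diam_of_mem hK₁c.isBounded (hz i).1 (hz j).1
  have hy : ∀ i j : Fin 4, ‖(z i).2 - (z j).2‖ ≤ Metric.diam K₂ := fun i j => by
    rw [← Complex.dist_eq]
    exact Metric.dist_le_diam_of_mem hK₂c.isBounded (hz i).2 (hz j).2
  have hdet : (Matrix.of fun i j =>
      ![1, (z i).1, (z i).2, (z i).1 * (z i).2] j : Matrix (Fin 4) (Fin 4) ℂ).det =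
      ((z 1).1 - (z 0).1) * ((z 3).1 - (z 2).1) * ((z 2).2 - (z 0).2) * ((z 3).2 - (z 1).2)
      - ((z 2).1 - (z 0).1) * ((z 3).1 - (z 1).1) * ((z 1).2 - (z 0).2) * ((z 3).2 - (z 2).2) := by
    rw [det_fin_four_aux]
    simp only [Matrix.of_apply, Matrix.cons_val', Matrix.cons_val_zero, Matrix.cons_val_one,
      Matrix.head_cons, Matrix.cons_val_two, Matrix.tail_cons, Matrix.cons_val_three,
      Matrix.empty_val', Matrix.cons_val_fin_one]
    ring
  rw [hdet]
  have h0 : (0:ℝ) ≤ Metric.diam K₁ := Metric.diam_nonneg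
  have h0' : (0:ℝ) ≤ Metric.diam K₂ := Metric.diam_nonneg
  calc ‖_‖ ≤ ‖((z 1).1 - (z 0).1) * ((z 3).1 - (z 2).1) * ((z 2).2 - (z 0).2) * ((z 3).2 - (z 1).2)‖
        + ‖((z 2).1 - (z 0).1) * ((z 3).1 - (z 1).1) * ((z 1).2 - (z 0).2) * ((z 3).2 - (z 2).2)‖ :=
      norm_sub_le _ _
    _ ≤ Metric.diam K₁ * Metric.diam K₁ * Metric.diam K₂ * Metric.diam K₂
        + Metric.diam K₁ * Metric.diam K₁ * Metric.diam K₂ * Metric.diam K₂ := by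
      simp only [norm_mul]
      gcongr
      · exact hx _ _
      · exact hx _ _
      · exact hy _ _
      · exact hy _ _
      · exact hx _ _
      · exact hx _ _
      · exact hy _ _
      · exact hy _ _
    _ = 2 * Metric.diam K₁ ^ 2 * Metric.diam K₂ ^ 2 := by ring
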